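/- Let D be a squarefree integer with D ≢ 1 mod 4, N = ℚ(√D), O_N = ℤ[√D], and Γ = Gal(N/ℚ) = {1, γ} with γ(√D) = −√D. Then the sequence 0 → O_N → 𝔇^{-1} → Ω → 0, where the second map sends a·(2√D)^{-1} ↦ a·d(√D), is an exact sequence of Γ-modules over O_N; in particular Ω^1_{O_N/ℤ} ≅ 𝔇^{-1}/O_N as O_N-modules with Γ-action. -/
import Mathlib

private lemma quot_smul (D : ℤ) (I : Ideal (Zsqrtd D)) (r b : Zsqrtd D) :
    r • Ideal.Quotient.mk I b = Ideal.Quotient.mk I (r * b) :=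
  (Submodule.Quotient.mk_smul I r b).symm

set_option synthInstance.maxHeartbeats 400000 in
private def myDer (D : ℤ) : Derivation ℤ (Zsqrtd D)
    (Zsqrtd D ⧸ Ideal.span {(2 : Zsqrtd D) * Zsqrtd.sqrtd}) where
  toFun x := Ideal.Quotient.mk _ ⟨x.im, 0⟩
  map_add' x y := by
    show Ideal.Quotient.mk _ _ = Ideal.Quotient.mk _ _ + Ideal.Quotient.mk _ _
    have h : (⟨(x + y).im, 0⟩ : Zsqrtd D) = ⟨x.im, 0⟩ + ⟨y.im, 0⟩ := by ext <;> simp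
    rw [h, map_add]
  map_smul' n x := by
    show Ideal.Quotient.mk _ _ = n • Ideal.Quotient.mk _ _
    have h : (⟨(n • x).im, 0⟩ : Zsqrtd D) = n • ⟨x.im, 0⟩ := by ext <;> simp
    rw [h, map_zsmul]
  map_one_eq_zero' := by
    show Ideal.Quotient.mk _ _ = 0
    have h : (⟨(1 : Zsqrtd D).im, 0⟩ : Zsqrtd D) = 0 := by ext <;> simp
    rw [h, map_zero]
  leibniz' x y := by
    show Ideal.Quotient.mk _ _ = x • Ideal.Quotient.mk _ _ + y • Ideal.Quotient.mk _ _
    rw [quot_smul, quot_smul, ← map_add, Ideal.Quotient.eq, Ideal.mem_span_singleton']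
    use ⟨-(x.im * y.im), 0⟩
    ext <;> simp <;> ring

private lemma f_apply (D : ℤ) (a : Zsqrtd D) :
    LinearMap.toSpanSingleton (Zsqrtd D) (KaehlerDifferential ℤ (Zsqrtd D))
      ((KaehlerDifferential.D ℤ (Zsqrtd D)) Zsqrtd.sqrtd) a
    = a • (KaehlerDifferential.D ℤ (Zsqrtd D)) Zsqrtd.sqrtd := rfl

private lemma dD (D : ℤ) (x : Zsqrtd D) :
    (KaehlerDifferential.D ℤ (Zsqrtd D)) x
      = (⟨x.im, 0⟩ : Zsqrtd D) • (KaehlerDifferential.D ℤ (Zsqrtd D)) Zsqrtd.sqrtd := by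
  have hx : x = (x.re : Zsqrtd D) + Zsqrtd.sqrtd * (x.im : Zsqrtd D) := by
    nth_rewrite 1 [show x = ⟨x.re, x.im⟩ from rfl]
    exact Zsqrtd.decompose
  have him : (⟨x.im, 0⟩ : Zsqrtd D) = (x.im : Zsqrtd D) := by ext <;> simp
  nth_rewrite 1 [hx]
  rw [map_add, Derivation.map_intCast, Derivation.leibniz, Derivation.map_intCast]
  rw [him]
  simp


theorem stmt14 (D : ℤ) (hD : Squarefree D) (hD4 : D % 4 ≠ 1)
    (f : Zsqrtd D →ₗ[Zsqrtd D] KaehlerDifferential ℤ (Zsqrtd D))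
    (hf : f = LinearMap.toSpanSingleton (Zsqrtd D) (KaehlerDifferential ℤ (Zsqrtd D))
        ((KaehlerDifferential.D ℤ (Zsqrtd D)) Zsqrtd.sqrtd)) :
    Function.Surjective f ∧
    LinearMap.ker f = Ideal.span {(2 : Zsqrtd D) * Zsqrtd.sqrtd} ∧
    ∀ g : KaehlerDifferential ℤ (Zsqrtd D) →+ KaehlerDifferential ℤ (Zsqrtd D),
      (∀ (r x : Zsqrtd D), g (r • (KaehlerDifferential.D ℤ (Zsqrtd D)) x)
          = star r • (KaehlerDifferential.D ℤ (Zsqrtd D)) (star x)) →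
      ∀ a : Zsqrtd D, g (f a) = f (-(star a)) := by
  subst hf
  refine ⟨?_, ?_, ?_⟩
  · -- surjectivity
    rw [← LinearMap.range_eq_top, ← top_le_iff,
      ← KaehlerDifferential.span_range_derivation ℤ (Zsqrtd D), Submodule.span_le]
    rintro _ ⟨x, rfl⟩
    exact ⟨⟨x.im, 0⟩, (dD D x).symm⟩
  · -- kernel
    apply le_antisymm
    · intro a ha
      have h1 : (myDer D).liftKaehlerDifferential
          (a • (KaehlerDifferential.D ℤ (Zsqrtd D)) Zsqrtd.sqrtd) = 0 := by
        rw [← f_apply, ha, map_zero]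
      rw [map_smul, Derivation.liftKaehlerDifferential_comp_D] at h1
      have h2 : (myDer D) Zsqrtd.sqrtd = Ideal.Quotient.mk _ 1 := by
        show Ideal.Quotient.mk _ _ = _
        congr 1
      rw [h2, quot_smul, mul_one] at h1
      exact Ideal.Quotient.eq_zero_iff_mem.mp h1
    · rw [Ideal.span_le, Set.singleton_subset_iff]
      show _ ∈ LinearMap.ker _
      rw [LinearMap.mem_ker, f_apply]
      have h1 : (KaehlerDifferential.D ℤ (Zsqrtd D)) ((Zsqrtd.sqrtd : Zsqrtd D) * Zsqrtd.sqrtd)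
          = ((2 : Zsqrtd D) * Zsqrtd.sqrtd) • (KaehlerDifferential.D ℤ (Zsqrtd D)) Zsqrtd.sqrtd := by
        rw [Derivation.leibniz, two_mul, add_smul]
      rw [← h1, Zsqrtd.dmuld, Derivation.map_intCast]
  · intro g hg a
    rw [f_apply, hg]
    have : star (Zsqrtd.sqrtd : Zsqrtd D) = -Zsqrtd.sqrtd := by
      ext <;> simp
    rw [this, map_neg, smul_neg, ← neg_smul, f_apply]
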